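/- Let x > 0, V > 0 and let λ ≥ 1 be an integer. For every N > 0 such that 2^λ·Q(x√(N/V)) < 1/2 there is a unique V̂(N) > 0 satisfying 2^λ·Q(x√(N/V)) = Q(x√(N/V̂(N))). Moreover, there exist constants c > 0, C > 0 and N₀ > 0 such that for all N ≥ N₀, c/N ≤ V̂(N) − V ≤ C/N; in particular V̂(N) → V as N → ∞. -/

import Mathlib

open scoped BigOperators

/-- A binary-input discrete channel: a finite output alphabet `Y` and a kernel
`W x y` = probability of output `y` given input `x`. -/
structure PreChannel where
  Y : Type
  [fin : Fintype Y]
  W : Bool → Y → ℝ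

attribute [instance] PreChannel.fin

namespace PreChannel

/-- `W` is a valid binary memoryless symmetric (BMS) channel. -/
def IsBMS (W : PreChannel) : Prop :=
  (∀ x y, 0 ≤ W.W x y) ∧ (∀ x, ∑ y, W.W x y = 1) ∧
    ∃ π : W.Y → W.Y, Function.Involutive π ∧ ∀ y, W.W false (π y) = W.W true y

/-- The polar "minus" transform `W⁻`. -/
noncomputable def minus (W : PreChannel) : PreChannel where
  Y := W.Y × W.Y
  fin := inferInstance
  W := fun u₁ p => ∑ u₂ : Bool, (1 / 2) * W.W (Bool.xor u₁ u₂) p.1 * W.W u₂ p.2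

/-- The polar "plus" transform `W⁺`; output is `(y₁, y₂, u₁)`. -/
noncomputable def plus (W : PreChannel) : PreChannel where
  Y := W.Y × W.Y × Bool
  fin := inferInstance
  W := fun u₂ p => (1 / 2) * W.W (Bool.xor p.2.2 u₂) p.1 * W.W u₂ p.2.1

/-- Capacity `I(W)` (in bits). -/
noncomputable def cap (W : PreChannel) : ℝ :=
  ∑ x : Bool, ∑ y, (1 / 2) * W.W x y *
    Real.logb 2 (W.W x y / ((1 / 2) * W.W false y + (1 / 2) * W.W true y))

/-- Dispersion `V(W)`. -/
noncomputable def disp (W : PreChannel) : ℝ :=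
  (∑ x : Bool, ∑ y, (1 / 2) * W.W x y *
      (Real.logb 2 (W.W x y / ((1 / 2) * W.W false y + (1 / 2) * W.W true y))) ^ 2)
    - cap W ^ 2

/-- Gallager's function `E₀(W, ρ)` (natural logarithm). -/
noncomputable def E0 (W : PreChannel) (ρ : ℝ) : ℝ :=
  - Real.log
      (∑ y, ((1 / 2) * (W.W false y ^ (1 / (1 + ρ)) + W.W true y ^ (1 / (1 + ρ)))) ^ (1 + ρ))

/-- Bhattacharyya parameter `Z(W)`. -/
noncomputable def Zb (W : PreChannel) : ℝ := ∑ y, Real.sqrt (W.W false y * W.W true y)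

/-- `E_x(W, ρ) = −ρ ln[(1 + Z(W)^{1/ρ})/2]`. -/
noncomputable def Ex (W : PreChannel) (ρ : ℝ) : ℝ :=
  - ρ * Real.log ((1 + Zb W ^ (1 / ρ)) / 2)

/-- Random-coding exponent `E_r(W, R)` as an extended real:
`max_{0 ≤ ρ ≤ 1} [E₀(W,ρ) − ρ R ln 2]` for `0 < R ≤ 1`, `+∞` at `R = 0`, `0` for `R > 1`. -/
noncomputable def Er (W : PreChannel) (R : ℝ) : EReal :=
  if R = 0 then ⊤
  else if 1 < R then 0
  else ((sSup {x : ℝ | ∃ ρ ∈ Set.Icc (0 : ℝ) 1, x = E0 W ρ - ρ * R * Real.log 2} : ℝ) : EReal)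

/-- Expurgated exponent `E_ex(W, R) = sup_{ρ ≥ 1} [E_x(W,ρ) − ρ R ln 2]`. -/
noncomputable def Eex (W : PreChannel) (R : ℝ) : EReal :=
  ⨆ ρ : {ρ : ℝ // 1 ≤ ρ}, ((Ex W ρ.1 - ρ.1 * R * Real.log 2 : ℝ) : EReal)

/-- `E(W, R) = max [E_r(W,R), E_ex(W,R)]` for `R ≤ 1`, and `0` for `R > 1`. -/
noncomputable def Echan (W : PreChannel) (R : ℝ) : EReal :=
  if 1 < R then 0 else max (Er W R) (Eex W R)

/-- `E(W, R, N₁) = max [E_r(W,R), E_ex(W, R + 2/N₁)]`. -/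
noncomputable def EchanN (W : PreChannel) (R : ℝ) (N₁ : ℕ) : EReal :=
  max (Er W R) (Eex W (R + 2 / (N₁ : ℝ)))

/-- Sub-channel `Wᵢ` after `lam` polarization steps: the most significant bit of `i`
is applied first, bit `1` = plus, bit `0` = minus. -/
noncomputable def subch : PreChannel → (lam : ℕ) → ℕ → PreChannel
  | W, 0, _ => W
  | W, l + 1, i => subch (if i / 2 ^ l % 2 = 1 then W.plus else W.minus) l (i % 2 ^ l)

/-- `W^s` for a sign sequence `s` (`true` = plus, `false` = minus), applied in order. -/
noncomputable def polarSeq : PreChannel → List Bool → PreChannel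
  | W, [] => W
  | W, b :: rest => polarSeq (if b then W.plus else W.minus) rest

/-- `exp(−t·E)` for `E ∈ [0, +∞]`, with the convention `exp(−∞) = 0`. -/
noncomputable def dexp (t : ℝ) (E : EReal) : ℝ :=
  if E = ⊤ then 0 else Real.exp (-t * E.toReal)

/-- `−ln s` with the convention `−ln 0 = +∞`. -/
noncomputable def nlog (s : ℝ) : EReal :=
  if s ≤ 0 then ⊤ else ((-Real.log s : ℝ) : EReal)

/-- The finite-blocklength exponent `E_λ(W, R, N₁)`:
`(1/(N₁ 2^λ)) · max over admissible rate tuples of −ln Σᵢ exp(−N₁ E(Wᵢ, Rᵢ, N₁))`. -/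
noncomputable def ElamN (W : PreChannel) (lam N₁ : ℕ) (R : ℝ) : EReal :=
  ((1 / ((N₁ : ℝ) * 2 ^ lam) : ℝ) : EReal) *
    sSup {v : EReal | ∃ Rv : Fin (2 ^ lam) → ℝ,
      (∀ i, Rv i ∈ Set.Icc (0 : ℝ) 1 ∧ ∃ k : ℤ, Rv i * (N₁ : ℝ) = (k : ℝ)) ∧
      (∑ i, Rv i) = 2 ^ lam * R ∧
      v = nlog (∑ i : Fin (2 ^ lam), dexp (N₁ : ℝ) (EchanN (subch W lam (i : ℕ)) (Rv i) N₁))}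

/-- The asymptotic exponent `E_λ(W, R)`, defined recursively;
`E_λ(W,R) = 0` for `R > 1` by convention. -/
noncomputable def ElamInf : PreChannel → ℕ → ℝ → EReal
  | W, 0, R => Echan W R
  | W, l + 1, R =>
      if 1 < R then 0
      else ((1 / 2 : ℝ) : EReal) *
        sSup {v : EReal | ∃ R₁ ∈ Set.Icc (max 0 (2 * R - 1)) (min 1 (2 * R)),
          v = min (ElamInf W.minus l R₁) (ElamInf W.plus l (2 * R - R₁))}

/-- `V_λ(W) = (Σᵢ √V(Wᵢ))² / 2^λ`. -/
noncomputable def Vlam (W : PreChannel) (lam : ℕ) : ℝ :=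
  (∑ i ∈ Finset.range (2 ^ lam), Real.sqrt (disp (subch W lam i))) ^ 2 / 2 ^ lam

end PreChannel

/-- Binary entropy function (base 2), with `h2 0 = h2 1 = 0`. -/
noncomputable def h2 (x : ℝ) : ℝ := -x * Real.logb 2 x - (1 - x) * Real.logb 2 (1 - x)

/-- Inverse of the binary entropy function, with values in `[0, 1/2]`. -/
noncomputable def h2inv (v : ℝ) : ℝ := Function.invFunOn h2 (Set.Icc 0 (1 / 2)) v

/-- `ε_h(x) = x − x²`. -/
noncomputable def epsh (x : ℝ) : ℝ := x - x ^ 2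

/-- `ε_l(x) = x − 1 + h₂(h₂⁻¹(1−x)·[2 − 2 h₂⁻¹(1−x)])`. -/
noncomputable def epsl (x : ℝ) : ℝ :=
  x - 1 + h2 (h2inv (1 - x) * (2 - 2 * h2inv (1 - x)))

/-- The binary symmetric channel with crossover probability `p`. -/
noncomputable def BSC (p : ℝ) : PreChannel where
  Y := Bool
  fin := inferInstance
  W := fun x y => if y = x then 1 - p else p

/-- The binary erasure channel with erasure probability `δ` (`none` = erasure). -/
noncomputable def BEC (δ : ℝ) : PreChannel where
  Y := Option Bool
  fin := inferInstance
  W := fun x y => match y with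
    | none => δ
    | some b => if b = x then 1 - δ else 0

/-- The channel-independent lower bound `Ê_λ(I, R)`. -/
noncomputable def Ehat : ℕ → ℝ → ℝ → EReal
  | 0, I, R => PreChannel.Echan (BSC (h2inv (1 - I))) R
  | l + 1, I, R =>
      ((1 / 2 : ℝ) : EReal) *
        sInf {w : EReal | ∃ ε ∈ Set.Icc (epsl I) (epsh I),
          w = sSup {v : EReal | ∃ R₁ ∈ Set.Icc (max 0 (2 * R - 1)) (min 1 (2 * R)),
            v = min (Ehat l (I - ε) R₁) (Ehat l (I + ε) (2 * R - R₁))}}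

/-- The Gaussian Q-function. -/
noncomputable def gaussQ (u : ℝ) : ℝ :=
  ∫ t in Set.Ioi u, (Real.sqrt (2 * Real.pi))⁻¹ * Real.exp (-t ^ 2 / 2)

open PreChannel

section GaussAux
open MeasureTheory Real Set Filter

noncomputable def phi (t : ℝ) : ℝ := (Real.sqrt (2 * Real.pi))⁻¹ * Real.exp (-t ^ 2 / 2)

lemma phi_eq (t : ℝ) : phi t = (Real.sqrt (2 * Real.pi))⁻¹ * Real.exp (-(1/2) * t ^ 2) := by
  rw [phi]; ring_nf

lemma phi_integrable : Integrable phi := by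
  have := (integrable_exp_neg_mul_sq (by norm_num : (0:ℝ) < 1/2)).const_mul
    ((Real.sqrt (2 * Real.pi))⁻¹)
  exact this.congr (Filter.Eventually.of_forall fun t => (phi_eq t).symm)

lemma phi_pos (t : ℝ) : 0 < phi t := by
  have h : 0 < Real.sqrt (2 * Real.pi) := Real.sqrt_pos.2 (by positivity)
  exact mul_pos (inv_pos.2 h) (Real.exp_pos _)

lemma phi_cont : Continuous phi := by
  unfold phi; continuity

lemma gaussQ_zero' : (∫ t in Set.Ioi (0:ℝ), phi t) = 1 / 2 := by
  have h : (∫ t in Set.Ioi (0:ℝ), Real.exp (-(1/2) * t ^ 2)) = Real.sqrt (Real.pi / (1/2)) / 2 :=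
    integral_gaussian_Ioi (1/2)
  rw [show (fun t => phi t) = fun t => (Real.sqrt (2 * Real.pi))⁻¹ * Real.exp (-(1/2) * t ^ 2) from funext phi_eq]
  rw [MeasureTheory.integral_const_mul, h]
  rw [show Real.pi / (1/2) = 2 * Real.pi by ring]
  rw [inv_mul_eq_div, div_eq_iff (by positivity)]
  ring

noncomputable def Qf (u : ℝ) : ℝ := ∫ t in Set.Ioi u, phi t

lemma Qf_zero : Qf 0 = 1 / 2 := gaussQ_zero'

lemma Qf_diff {a b : ℝ} (hab : a ≤ b) : Qf a = (∫ t in a..b, phi t) + Qf b := by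
  rw [Qf, Qf, ← Ioc_union_Ioi_eq_Ioi hab,
    setIntegral_union (Ioc_disjoint_Ioi le_rfl) measurableSet_Ioi
      phi_integrable.integrableOn phi_integrable.integrableOn,
    intervalIntegral.integral_of_le hab]

lemma Qf_nonneg (u : ℝ) : 0 ≤ Qf u :=
  setIntegral_nonneg measurableSet_Ioi fun t _ => (phi_pos t).le

lemma Qf_strictAnti : StrictAnti Qf := by
  intro a b hab
  rw [Qf_diff hab.le]
  have : 0 < ∫ t in a..b, phi t :=
    intervalIntegral.intervalIntegral_pos_of_pos (phi_cont.intervalIntegrable a b)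
      (fun t => phi_pos t) hab
  linarith

lemma Qf_pos (u : ℝ) : 0 < Qf u := by
  have h := Qf_diff (le_of_lt (lt_add_one u))
  have h2 : 0 < ∫ t in u..(u+1), phi t :=
    intervalIntegral.intervalIntegral_pos_of_pos (phi_cont.intervalIntegrable _ _)
      (fun t => phi_pos t) (lt_add_one u)
  have := Qf_nonneg (u + 1)
  linarith

lemma Qf_eq (u : ℝ) : Qf u = Qf 0 - ∫ t in (0:ℝ)..u, phi t := by
  rcases le_total 0 u with h | h
  · rw [Qf_diff h]; ring
  · rw [Qf_diff h, intervalIntegral.integral_symm]; ring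

lemma Qf_continuous : Continuous Qf := by
  have : Continuous fun u => ∫ t in (0:ℝ)..u, phi t :=
    intervalIntegral.continuous_primitive (fun a b => phi_cont.intervalIntegrable a b) 0
  have h : Qf = fun u => Qf 0 - ∫ t in (0:ℝ)..u, phi t := funext Qf_eq
  rw [h]
  exact continuous_const.sub this

lemma sq_half_deriv (t : ℝ) : HasDerivAt (fun t : ℝ => -t ^ 2 / 2) (-t) t := by
  have h1 : HasDerivAt (fun t : ℝ => t ^ 2) (2 * t) t := by
    simpa using hasDerivAt_pow 2 t
  have := (h1.neg).div_const 2
  exact this.congr_deriv (by ring)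

lemma phi_hasDeriv (t : ℝ) : HasDerivAt phi (-t * phi t) t := by
  have h := ((sq_half_deriv t).exp).const_mul ((Real.sqrt (2 * Real.pi))⁻¹)
  exact h.congr_deriv (by unfold phi; ring)

lemma phi_tendsto : Tendsto phi atTop (nhds 0) := by
  have h1 : Tendsto (fun t : ℝ => t ^ 2 / 2) atTop atTop :=
    (tendsto_pow_atTop two_ne_zero).atTop_div_const (by norm_num)
  have h2 : Tendsto (fun t : ℝ => -t ^ 2 / 2) atTop atBot := by
    have := tendsto_neg_atBot_iff.2 h1
    simpa [neg_div] using this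
  have h3 : Tendsto (fun t : ℝ => Real.exp (-t ^ 2 / 2)) atTop (nhds 0) :=
    Real.tendsto_exp_atBot.comp h2
  have h4 := h3.const_mul ((Real.sqrt (2 * Real.pi))⁻¹)
  rw [mul_zero] at h4
  exact h4.congr fun t => rfl

lemma integral_t_phi {u : ℝ} (hu : 0 < u) :
    (∫ t in Set.Ioi u, t * phi t) = phi u ∧ IntegrableOn (fun t => t * phi t) (Set.Ioi u) := by
  have hderiv : ∀ t ∈ Set.Ici u, HasDerivAt (fun s => -phi s) (t * phi t) t := by
    intro t _
    have := (phi_hasDeriv t).neg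
    exact this.congr_deriv (by ring)
  have hpos : ∀ t ∈ Set.Ioi u, 0 ≤ t * phi t := fun t ht =>
    mul_nonneg (le_of_lt (hu.trans ht)) (phi_pos t).le
  have htd : Tendsto (fun s => -phi s) atTop (nhds 0) := by
    simpa using phi_tendsto.neg
  constructor
  · have := integral_Ioi_of_hasDerivAt_of_nonneg' hderiv hpos htd
    simpa using this
  · exact integrableOn_Ioi_deriv_of_nonneg' hderiv hpos htd

lemma Qf_upper {u : ℝ} (hu : 0 < u) : Qf u ≤ phi u / u := by
  obtain ⟨hval, hint⟩ := integral_t_phi hu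
  have hmono : Qf u ≤ ∫ t in Set.Ioi u, (1 / u) * (t * phi t) := by
    rw [Qf]
    refine setIntegral_mono_on phi_integrable.integrableOn (hint.const_mul (1/u))
      measurableSet_Ioi fun t ht => ?_
    have h1 : 1 ≤ t / u := (one_le_div hu).2 (le_of_lt ht)
    have := mul_le_mul_of_nonneg_right h1 (phi_pos t).le
    rw [one_mul] at this
    calc phi t ≤ t / u * phi t := this
    _ = 1 / u * (t * phi t) := by ring
  rw [integral_const_mul, hval] at hmono
  rw [div_eq_inv_mul, ← one_div]
  exact hmono

lemma negG_deriv (t : ℝ) :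
    HasDerivAt (fun s => -(s / (s ^ 2 + 1) * phi s)) (phi t * (1 - 2 / (t ^ 2 + 1) ^ 2)) t := by
  have hne : (t ^ 2 + 1) ≠ 0 := by positivity
  have h1 : HasDerivAt (fun s : ℝ => s ^ 2 + 1) (2 * t) t := by
    simpa using (hasDerivAt_pow 2 t).add_const 1
  have hh : HasDerivAt (fun s : ℝ => s / (s ^ 2 + 1))
      ((1 * (t ^ 2 + 1) - t * (2 * t)) / (t ^ 2 + 1) ^ 2) t :=
    (hasDerivAt_id t).div h1 hne
  have hm := (hh.mul (phi_hasDeriv t)).neg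
  refine hm.congr_deriv ?_
  have hne2 : ((t ^ 2 + 1) ^ 2 : ℝ) ≠ 0 := by positivity
  field_simp
  ring

lemma negG_tendsto : Tendsto (fun s : ℝ => -(s / (s ^ 2 + 1) * phi s)) atTop (nhds 0) := by
  have hlow : Tendsto (fun s : ℝ => -phi s) atTop (nhds 0) := by simpa using phi_tendsto.neg
  refine tendsto_of_tendsto_of_tendsto_of_le_of_le' hlow tendsto_const_nhds ?_ ?_
  · filter_upwards [eventually_ge_atTop (0:ℝ)] with s hs
    have h1 : s / (s ^ 2 + 1) ≤ 1 := by
      rw [div_le_one (by positivity)]; nlinarith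
    have := mul_le_mul_of_nonneg_right h1 (phi_pos s).le
    rw [one_mul] at this
    linarith
  · filter_upwards [eventually_ge_atTop (0:ℝ)] with s hs
    have : 0 ≤ s / (s ^ 2 + 1) * phi s :=
      mul_nonneg (div_nonneg hs (by positivity)) (phi_pos s).le
    linarith

lemma Qf_lower {u : ℝ} (hu : 1 ≤ u) : phi u / (2 * u) ≤ Qf u := by
  set G' : ℝ → ℝ := fun t => phi t * (1 - 2 / (t ^ 2 + 1) ^ 2) with hG'
  have hderiv : ∀ t ∈ Set.Ici u, HasDerivAt (fun s => -(s / (s ^ 2 + 1) * phi s)) (G' t) t :=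
    fun t _ => negG_deriv t
  have hpos : ∀ t ∈ Set.Ioi u, 0 ≤ G' t := by
    intro t ht
    have ht1 : 1 ≤ t := hu.trans (le_of_lt ht)
    have h4 : (4:ℝ) ≤ (t ^ 2 + 1) ^ 2 := by nlinarith [sq_nonneg (t - 1), sq_nonneg (t + 1), sq_nonneg (t^2 - 1)]
    have : 2 / (t ^ 2 + 1) ^ 2 ≤ 1 / 2 := by
      rw [div_le_div_iff₀ (by positivity) (by norm_num)]; linarith
    have := (phi_pos t).le
    have h5 : (0:ℝ) ≤ 1 - 2 / (t ^ 2 + 1) ^ 2 := by linarith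
    positivity
  have hval := integral_Ioi_of_hasDerivAt_of_nonneg' hderiv hpos negG_tendsto
  have hint := integrableOn_Ioi_deriv_of_nonneg' hderiv hpos negG_tendsto
  rw [zero_sub, neg_neg] at hval
  have hmono : (∫ t in Set.Ioi u, G' t) ≤ Qf u := by
    rw [Qf]
    refine setIntegral_mono_on hint phi_integrable.integrableOn measurableSet_Ioi fun t _ => ?_
    have h1 : 1 - 2 / (t ^ 2 + 1) ^ 2 ≤ 1 := by
      have : (0:ℝ) ≤ 2 / (t ^ 2 + 1) ^ 2 := by positivity
      linarith
    calc G' t ≤ phi t * 1 := mul_le_mul_of_nonneg_left h1 (phi_pos t).le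
    _ = phi t := mul_one _
  have key : u / (u ^ 2 + 1) * phi u ≤ Qf u := by
    rw [← hval]; exact hmono
  have hfin : phi u / (2 * u) ≤ u / (u ^ 2 + 1) * phi u := by
    have hp := phi_pos u
    rw [div_le_iff₀ (by positivity : (0:ℝ) < 2 * u)]
    have he : u / (u ^ 2 + 1) * phi u * (2 * u) = (2 * u ^ 2) / (u ^ 2 + 1) * phi u := by ring
    rw [he]
    have h1 : (1:ℝ) ≤ (2 * u ^ 2) / (u ^ 2 + 1) := by
      rw [le_div_iff₀ (by positivity)]; nlinarith
    nlinarith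
  linarith

lemma phi_anti {s t : ℝ} (hs : 0 ≤ s) (hst : s ≤ t) : phi t ≤ phi s := by
  unfold phi
  have : Real.exp (-t ^ 2 / 2) ≤ Real.exp (-s ^ 2 / 2) := by
    apply Real.exp_le_exp.2; nlinarith
  have h0 : (0:ℝ) ≤ (Real.sqrt (2 * Real.pi))⁻¹ := by positivity
  exact mul_le_mul_of_nonneg_left this h0

lemma sqrt_two_pi_ge : (2:ℝ) ≤ Real.sqrt (2 * Real.pi) := by
  have : (4:ℝ) ≤ 2 * Real.pi := by nlinarith [Real.pi_gt_three]
  nlinarith [Real.sq_sqrt (by positivity : (0:ℝ) ≤ 2 * Real.pi),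
    Real.sqrt_nonneg (2 * Real.pi)]

lemma phi_le (u : ℝ) : phi u ≤ Real.exp (-u ^ 2 / 2) / 2 := by
  unfold phi
  have h2 : (Real.sqrt (2 * Real.pi))⁻¹ ≤ 1 / 2 := by
    rw [inv_le_comm₀ (by positivity) (by norm_num)]
    simpa using sqrt_two_pi_ge
  have := Real.exp_pos (-u ^ 2 / 2)
  nlinarith

-- inversion: the u-value of a variance v
lemma u_pos {x N v : ℝ} (hx : 0 < x) (hN : 0 < N) (hv : 0 < v) :
    0 < x * Real.sqrt (N / v) := mul_pos hx (Real.sqrt_pos.2 (div_pos hN hv))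

lemma u_sq {x N v : ℝ} (hv : 0 < v) (hN : 0 ≤ N) :
    (x * Real.sqrt (N / v)) ^ 2 = x ^ 2 * N / v := by
  rw [mul_pow, Real.sq_sqrt (div_nonneg hN hv.le)]; ring

lemma v_of_u {x N v : ℝ} (hx : 0 < x) (hN : 0 < N) (hv : 0 < v) :
    v = x ^ 2 * N / (x * Real.sqrt (N / v)) ^ 2 := by
  rw [u_sq hv hN.le]
  field_simp

lemma u_of_t {x N t : ℝ} (hx : 0 < x) (hN : 0 < N) (ht : 0 < t) :
    x * Real.sqrt (N / (x ^ 2 * N / t ^ 2)) = t := by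
  have h1 : N / (x ^ 2 * N / t ^ 2) = (t / x) ^ 2 := by
    field_simp
  rw [h1, Real.sqrt_sq (by positivity)]
  field_simp

set_option maxHeartbeats 1000000 in
theorem stmt16' (x V : ℝ) (hx : 0 < x) (hV : 0 < V) (lam : ℕ) (hlam : 1 ≤ lam) :
    (∀ N : ℝ, 0 < N → (2 : ℝ) ^ lam * Qf (x * Real.sqrt (N / V)) < 1 / 2 →
      ∃! Vh : ℝ, 0 < Vh ∧
        (2 : ℝ) ^ lam * Qf (x * Real.sqrt (N / V)) = Qf (x * Real.sqrt (N / Vh))) ∧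
    ∃ c C N₀ : ℝ, 0 < c ∧ 0 < C ∧ 0 < N₀ ∧
      (∀ N : ℝ, N₀ ≤ N →
        (2 : ℝ) ^ lam * Qf (x * Real.sqrt (N / V)) < 1 / 2 ∧
        ∀ Vh : ℝ, 0 < Vh →
          (2 : ℝ) ^ lam * Qf (x * Real.sqrt (N / V)) = Qf (x * Real.sqrt (N / Vh)) →
          c / N ≤ Vh - V ∧ Vh - V ≤ C / N) ∧
      (∀ Vhf : ℝ → ℝ,
        (∀ N : ℝ, N₀ ≤ N → 0 < Vhf N ∧
          (2 : ℝ) ^ lam * Qf (x * Real.sqrt (N / V)) =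
            Qf (x * Real.sqrt (N / Vhf N))) →
        Filter.Tendsto Vhf Filter.atTop (nhds V)) := by
  set K : ℝ := (2 : ℝ) ^ lam with hKdef
  have hK2 : (2:ℝ) ≤ K := by
    calc (2:ℝ) = 2 ^ 1 := (pow_one 2).symm
    _ ≤ 2 ^ lam := pow_le_pow_right₀ one_le_two hlam
  have hK0 : (0:ℝ) < K := by linarith
  clear_value K
  -- generic injectivity of Vh ↦ Qf (x √(N/Vh)) for fixed N
  have uniq : ∀ N : ℝ, 0 < N → ∀ V₁ V₂ : ℝ, 0 < V₁ → 0 < V₂ →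
      Qf (x * Real.sqrt (N / V₁)) = Qf (x * Real.sqrt (N / V₂)) → V₁ = V₂ := by
    intro N hN V₁ V₂ h1 h2 heq
    have := Qf_strictAnti.injective heq
    rw [v_of_u hx hN h1, v_of_u hx hN h2, this]
  constructor
  · -- existence and uniqueness
    intro N hN hsmall
    set u : ℝ := x * Real.sqrt (N / V) with hu_def
    have hu : 0 < u := u_pos hx hN hV
    set y : ℝ := K * Qf u with hy_def
    have hyu : Qf u < y := by
      have := Qf_pos u
      nlinarith
    have hy0 : y < Qf 0 := by rw [Qf_zero]; exact hsmall
    have hmem : y ∈ Set.Icc (Qf u) (Qf 0) := ⟨hyu.le, hy0.le⟩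
    obtain ⟨t, ⟨ht0, htu⟩, htq⟩ :=
      intermediate_value_Icc' hu.le Qf_continuous.continuousOn hmem
    have htpos : 0 < t := by
      rcases ht0.lt_or_eq with h | h
      · exact h
      · exfalso; rw [← h] at htq; rw [htq] at hy0; exact lt_irrefl _ hy0
    refine ⟨x ^ 2 * N / t ^ 2, ⟨by positivity, ?_⟩, ?_⟩
    · rw [u_of_t hx hN htpos, htq]
    · rintro Vh' ⟨hVh', heq'⟩
      have heq2 : Qf (x * Real.sqrt (N / Vh')) = Qf (x * Real.sqrt (N / (x ^ 2 * N / t ^ 2))) := by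
        rw [u_of_t hx hN htpos, htq, ← heq']
      exact uniq N hN Vh' _ hVh' (by positivity) heq2
  · -- quantitative bounds
    set E : ℝ := Real.exp (-K) with hEdef
    have hE0 : 0 < E := Real.exp_pos _
    have hEexp : E * Real.exp K = 1 := by rw [hEdef, ← Real.exp_add]; simp
    clear_value E
    have main : ∀ N : ℝ, max 1 (4 * K ^ 2 * V / x ^ 2) ≤ N →
        K * Qf (x * Real.sqrt (N / V)) < 1 / 2 ∧
        ∀ Vh : ℝ, 0 < Vh → K * Qf (x * Real.sqrt (N / V)) = Qf (x * Real.sqrt (N / Vh)) →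
          E * V ^ 2 / (2 * x ^ 2) / N ≤ Vh - V ∧ Vh - V ≤ 8 * K * V ^ 2 / x ^ 2 / N := by
      intro N hN
      have hN1 : (1:ℝ) ≤ N := le_trans (le_max_left _ _) hN
      have hN0 : (0:ℝ) < N := by linarith
      set u : ℝ := x * Real.sqrt (N / V) with hu_def
      have hu : 0 < u := u_pos hx hN0 hV
      have husq : u ^ 2 = x ^ 2 * N / V := u_sq hV hN0.le
      have hVeq : V = x ^ 2 * N / u ^ 2 := v_of_u hx hN0 hV
      clear_value u
      have hu2K : 2 * K ≤ u := by
        have h1 : 4 * K ^ 2 * V / x ^ 2 ≤ N := le_trans (le_max_right _ _) hN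
        have h1' : 4 * K ^ 2 * V ≤ x ^ 2 * N := by
          rw [div_le_iff₀ (by positivity)] at h1; nlinarith
        have h2 : 4 * K ^ 2 ≤ u ^ 2 := by
          rw [husq, le_div_iff₀ hV]; linarith
        nlinarith
      have hu1 : (1:ℝ) ≤ u := by nlinarith
      have hQu := Qf_pos u
      have hphiu := phi_pos u
      have hQuu : Qf u ≤ phi u / u := Qf_upper hu
      have hsmall : K * Qf u < 1 / 2 := by
        have h1 : Qf u ≤ phi u := le_trans hQuu (by
          rw [div_le_iff₀ hu]; nlinarith)
        have h2 : phi u ≤ Real.exp (-u ^ 2 / 2) / 2 := phi_le u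
        have h3 : K < Real.exp (u ^ 2 / 2) := by
          have := Real.add_one_le_exp (u ^ 2 / 2)
          nlinarith
        have hprod : Real.exp (u ^ 2 / 2) * Real.exp (-u ^ 2 / 2) = 1 := by
          rw [← Real.exp_add, show u ^ 2 / 2 + -u ^ 2 / 2 = 0 by ring, Real.exp_zero]
        have h4 : K * Real.exp (-u ^ 2 / 2) < 1 := by
          nlinarith [Real.exp_pos (-u ^ 2 / 2)]
        nlinarith [Real.exp_pos (-u ^ 2 / 2)]
      refine ⟨hsmall, ?_⟩
      intro Vh hVh heq
      set u' : ℝ := x * Real.sqrt (N / Vh) with hu'_def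
      have hu' : 0 < u' := u_pos hx hN0 hVh
      have hu'sq : u' ^ 2 = x ^ 2 * N / Vh := u_sq hVh hN0.le
      have hVheq : Vh = x ^ 2 * N / u' ^ 2 := v_of_u hx hN0 hVh
      clear_value u'
      have hQeq : Qf u' = K * Qf u := heq.symm
      have hu'u : u' < u := by
        have h : Qf u < Qf u' := by rw [hQeq]; nlinarith
        by_contra hcon
        push_neg at hcon
        rcases hcon.lt_or_eq with h2 | h2
        · exact absurd (Qf_strictAnti h2) (by linarith)
        · rw [h2] at h; exact lt_irrefl _ h
      have hdiff : Qf u' - Qf u = ∫ t in u'..u, phi t := by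
        have := Qf_diff hu'u.le; linarith
      have hKQ : (K - 1) * Qf u = ∫ t in u'..u, phi t := by
        rw [← hdiff, hQeq]; ring
      have hlow : (u - u') * phi u ≤ ∫ t in u'..u, phi t := by
        have h := intervalIntegral.integral_mono_on hu'u.le
          (intervalIntegrable_const (μ := volume) (c := phi u)) (phi_cont.intervalIntegrable _ _)
          (fun t ht => phi_anti (le_trans hu'.le ht.1) ht.2)
        simpa [smul_eq_mul] using h
      have hup : (∫ t in u'..u, phi t) ≤ (u - u') * phi u' := by
        have h := intervalIntegral.integral_mono_on hu'u.le
          (phi_cont.intervalIntegrable _ _) (intervalIntegrable_const (μ := volume) (c := phi u'))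
          (fun t ht => phi_anti hu'.le ht.1)
        simpa [smul_eq_mul] using h
      have hdelta_up : u - u' ≤ K / u := by
        have h1 : (u - u') * phi u ≤ (K - 1) * Qf u := by rw [hKQ]; exact hlow
        have h2 : (K - 1) * Qf u ≤ (K - 1) * (phi u / u) :=
          mul_le_mul_of_nonneg_left hQuu (by linarith)
        have h3 : (u - u') * phi u ≤ (K / u) * phi u := by
          have h4 : (K - 1) / u ≤ K / u := by gcongr; linarith
          have h5 : (K - 1) * (phi u / u) = ((K - 1) / u) * phi u := by ring
          nlinarith
        exact le_of_mul_le_mul_right h3 hphiu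
      have hu'half : u / 2 ≤ u' := by
        have h : K / u ≤ u / 2 := by
          rw [div_le_div_iff₀ hu (by norm_num)]
          nlinarith
        linarith
      have h5 : u ^ 2 - u' ^ 2 ≤ 2 * K := by
        have h6 : (u - u') * (u + u') ≤ (K / u) * (2 * u) :=
          mul_le_mul hdelta_up (by linarith) (by positivity) (by positivity)
        have h7 : (K / u) * (2 * u) = 2 * K := by field_simp
        nlinarith
      have hdelta_low : E / (2 * u) ≤ u - u' := by
        have hphibound : phi u' ≤ phi u * Real.exp K := by
          have harg : -u' ^ 2 / 2 ≤ -u ^ 2 / 2 + K := by linarith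
          calc phi u' = (Real.sqrt (2 * Real.pi))⁻¹ * Real.exp (-u' ^ 2 / 2) := rfl
          _ ≤ (Real.sqrt (2 * Real.pi))⁻¹ * Real.exp (-u ^ 2 / 2 + K) :=
              mul_le_mul_of_nonneg_left (Real.exp_le_exp.2 harg) (by positivity)
          _ = phi u * Real.exp K := by rw [Real.exp_add, phi]; ring
        have hQl : phi u / (2 * u) ≤ Qf u := Qf_lower hu1
        have h8 : (K - 1) * (phi u / (2 * u)) ≤ (u - u') * (phi u * Real.exp K) := by
          calc (K - 1) * (phi u / (2 * u)) ≤ (K - 1) * Qf u :=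
              mul_le_mul_of_nonneg_left hQl (by linarith)
          _ = ∫ t in u'..u, phi t := hKQ
          _ ≤ (u - u') * phi u' := hup
          _ ≤ (u - u') * (phi u * Real.exp K) :=
              mul_le_mul_of_nonneg_left hphibound (by linarith)
        have h9 : phi u / (2 * u) ≤ (u - u') * (phi u * Real.exp K) := by
          have ha : (0:ℝ) ≤ phi u / (2 * u) := by positivity
          nlinarith
        have hEK : E * Real.exp K = 1 := hEexp
        have h10 : E * (phi u / (2 * u)) ≤ (u - u') * phi u := by
          calc E * (phi u / (2 * u)) ≤ E * ((u - u') * (phi u * Real.exp K)) :=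
              mul_le_mul_of_nonneg_left h9 hE0.le
          _ = (u - u') * phi u * (E * Real.exp K) := by ring
          _ = (u - u') * phi u := by rw [hEK, mul_one]
        have h11 : E / (2 * u) * phi u ≤ (u - u') * phi u := by
          calc E / (2 * u) * phi u = E * (phi u / (2 * u)) := by ring
          _ ≤ _ := h10
        exact le_of_mul_le_mul_right h11 hphiu
      have hVhV : Vh - V = x ^ 2 * N * (u ^ 2 - u' ^ 2) / (u ^ 2 * u' ^ 2) := by
        rw [hVeq, hVheq]
        field_simp
      have hu'sq_le : u' ^ 2 ≤ u ^ 2 := by nlinarith [hu', hu'u]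
      have hu'sq_ge : u ^ 2 / 4 ≤ u' ^ 2 := by nlinarith [hu'half, hu']
      clear hdiff hKQ hlow hup heq hQeq hQuu hQu hsmall hphiu hu'sq husq hVh
      constructor
      · have h1 : E / 2 ≤ u ^ 2 - u' ^ 2 := by
          have h6 : (E / (2 * u)) * u ≤ (u - u') * (u + u') :=
            mul_le_mul hdelta_low (by linarith) hu.le (by linarith)
          have h7 : (E / (2 * u)) * u = E / 2 := by field_simp
          calc E / 2 = (E / (2 * u)) * u := h7.symm
          _ ≤ (u - u') * (u + u') := h6
          _ = u ^ 2 - u' ^ 2 := by ring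
        have hc : E * V ^ 2 / (2 * x ^ 2) / N = (E * x ^ 2 * N / 2) / u ^ 4 := by
          rw [hVeq]; field_simp
        rw [hc, hVhV, div_le_div_iff₀ (show (0:ℝ) < u ^ 4 by positivity)
          (show (0:ℝ) < u ^ 2 * u' ^ 2 by positivity)]
        have hu4 : u ^ 2 * u' ^ 2 ≤ u ^ 4 := by
          have h := mul_le_mul_of_nonneg_left hu'sq_le (sq_nonneg u)
          calc u ^ 2 * u' ^ 2 ≤ u ^ 2 * u ^ 2 := h
          _ = u ^ 4 := by ring
        have step1 : (E * x ^ 2 * N / 2) * (u ^ 2 * u' ^ 2) ≤ (E * x ^ 2 * N / 2) * u ^ 4 :=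
          mul_le_mul_of_nonneg_left hu4 (by positivity)
        have step2 : (E * x ^ 2 * N / 2) * u ^ 4 ≤ (x ^ 2 * N * (u ^ 2 - u' ^ 2)) * u ^ 4 := by
          have h12 : E * x ^ 2 * N / 2 ≤ x ^ 2 * N * (u ^ 2 - u' ^ 2) := by
            have h := mul_le_mul_of_nonneg_left h1 (show (0:ℝ) ≤ x ^ 2 * N by positivity)
            calc E * x ^ 2 * N / 2 = x ^ 2 * N * (E / 2) := by ring
            _ ≤ x ^ 2 * N * (u ^ 2 - u' ^ 2) := h
          exact mul_le_mul_of_nonneg_right h12 (by positivity)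
        linarith
      · have hC : 8 * K * V ^ 2 / x ^ 2 / N = (2 * K * x ^ 2 * N) / (u ^ 4 / 4) := by
          rw [hVeq]; field_simp; ring
        rw [hVhV, hC, div_le_div_iff₀ (show (0:ℝ) < u ^ 2 * u' ^ 2 by positivity)
          (show (0:ℝ) < u ^ 4 / 4 by positivity)]
        have step1 : (x ^ 2 * N * (u ^ 2 - u' ^ 2)) * (u ^ 4 / 4) ≤
            (2 * K * x ^ 2 * N) * (u ^ 4 / 4) := by
          have h12 : x ^ 2 * N * (u ^ 2 - u' ^ 2) ≤ 2 * K * x ^ 2 * N := by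
            have h := mul_le_mul_of_nonneg_left h5 (show (0:ℝ) ≤ x ^ 2 * N by positivity)
            calc x ^ 2 * N * (u ^ 2 - u' ^ 2) ≤ x ^ 2 * N * (2 * K) := h
            _ = 2 * K * x ^ 2 * N := by ring
          exact mul_le_mul_of_nonneg_right h12 (by positivity)
        have step2 : (2 * K * x ^ 2 * N) * (u ^ 4 / 4) ≤ (2 * K * x ^ 2 * N) * (u ^ 2 * u' ^ 2) := by
          have h13 : u ^ 4 / 4 ≤ u ^ 2 * u' ^ 2 := by
            have h := mul_le_mul_of_nonneg_left hu'sq_ge (sq_nonneg u)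
            calc u ^ 4 / 4 = u ^ 2 * (u ^ 2 / 4) := by ring
            _ ≤ u ^ 2 * u' ^ 2 := h
          exact mul_le_mul_of_nonneg_left h13 (by positivity)
        linarith
    refine ⟨E * V ^ 2 / (2 * x ^ 2), 8 * K * V ^ 2 / x ^ 2, max 1 (4 * K ^ 2 * V / x ^ 2),
      by positivity, by positivity, lt_max_iff.2 (Or.inl one_pos), main, ?_⟩
    intro Vhf hVhf
    set c : ℝ := E * V ^ 2 / (2 * x ^ 2) with hcdef
    set C : ℝ := 8 * K * V ^ 2 / x ^ 2 with hCdef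
    have hcl : Tendsto (fun N : ℝ => V + c / N) atTop (nhds V) := by
      have h1 : Tendsto (fun N : ℝ => c / N) atTop (nhds 0) :=
        Tendsto.div_atTop tendsto_const_nhds tendsto_id
      have h2 := (tendsto_const_nhds (α := ℝ) (f := atTop) (x := V)).add h1
      simpa using h2
    have hCl : Tendsto (fun N : ℝ => V + C / N) atTop (nhds V) := by
      have h1 : Tendsto (fun N : ℝ => C / N) atTop (nhds 0) :=
        Tendsto.div_atTop tendsto_const_nhds tendsto_id
      have h2 := (tendsto_const_nhds (α := ℝ) (f := atTop) (x := V)).add h1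
      simpa using h2
    refine tendsto_of_tendsto_of_tendsto_of_le_of_le' hcl hCl ?_ ?_
    · filter_upwards [eventually_ge_atTop (max 1 (4 * K ^ 2 * V / x ^ 2))] with N hN
      obtain ⟨hpos, heq⟩ := hVhf N hN
      obtain ⟨h1, _⟩ := (main N hN).2 (Vhf N) hpos heq
      linarith
    · filter_upwards [eventually_ge_atTop (max 1 (4 * K ^ 2 * V / x ^ 2))] with N hN
      obtain ⟨hpos, heq⟩ := hVhf N hN
      obtain ⟨_, h2⟩ := (main N hN).2 (Vhf N) hpos heq
      linarith

end GaussAux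


/-- existence, uniqueness and `Θ(1/N)` convergence of `V̂(N)`. -/
theorem stmt16 (x V : ℝ) (hx : 0 < x) (hV : 0 < V) (lam : ℕ) (hlam : 1 ≤ lam) :
    (∀ N : ℝ, 0 < N → (2 : ℝ) ^ lam * gaussQ (x * Real.sqrt (N / V)) < 1 / 2 →
      ∃! Vh : ℝ, 0 < Vh ∧
        (2 : ℝ) ^ lam * gaussQ (x * Real.sqrt (N / V)) = gaussQ (x * Real.sqrt (N / Vh))) ∧
    ∃ c C N₀ : ℝ, 0 < c ∧ 0 < C ∧ 0 < N₀ ∧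
      (∀ N : ℝ, N₀ ≤ N →
        (2 : ℝ) ^ lam * gaussQ (x * Real.sqrt (N / V)) < 1 / 2 ∧
        ∀ Vh : ℝ, 0 < Vh →
          (2 : ℝ) ^ lam * gaussQ (x * Real.sqrt (N / V)) = gaussQ (x * Real.sqrt (N / Vh)) →
          c / N ≤ Vh - V ∧ Vh - V ≤ C / N) ∧
      (∀ Vhf : ℝ → ℝ,
        (∀ N : ℝ, N₀ ≤ N → 0 < Vhf N ∧
          (2 : ℝ) ^ lam * gaussQ (x * Real.sqrt (N / V)) =
            gaussQ (x * Real.sqrt (N / Vhf N))) →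
        Filter.Tendsto Vhf Filter.atTop (nhds V)) := by
  have h : gaussQ = Qf := funext fun u => rfl
  rw [h]
  exact stmt16' x V hx hV lam hlam
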